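/- Let d(n) be a sequence of positive integers with log d(n) = o(log n), and let A = P^{(1)} + ⋯ + P^{(d(n))} be the sum of d(n) independent uniformly random n×n permutation matrices. Fix k ≥ 1. For a tuple i = (i_1,…,i_k) ∈ {1,…,n}^k let A_i = A_{i_1,i_2}·A_{i_2,i_3}⋯A_{i_{k−1},i_k}·A_{i_k,i_1}, let v(i) be the number of distinct values among i_1,…,i_k, and let e(i) be the number of distinct pairs among (i_1,i_2), (i_2,i_3), …, (i_{k−1},i_k), (i_k,i_1). Define R_k = Σ_{i : v(i) = e(i)} A_i·1{A_i > 1} and S_k = Σ_{i : v(i) < e(i)} A_i, where the sums run over i ∈ {1,…,n}^k. Then R_k + S_k converges to 0 in probability as n → ∞. -/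

import Mathlib

open Finset Filter

open scoped Classical

/-- Probability of an event under the uniform distribution on a finite type. -/
noncomputable def pr {α : Type*} [Fintype α] (p : α → Prop) : ℝ :=
  ((Finset.univ.filter fun a => p a).card : ℝ) / Fintype.card α

/-- The permutation matrix of `π`, with natural-number entries: `P i j = 1` iff `π i = j`. -/
def permMatrixN (n : ℕ) (π : Equiv.Perm (Fin n)) : Matrix (Fin n) (Fin n) ℕ :=
  fun i j => if π i = j then 1 else 0

/-- The sum `A = P⁽¹⁾ + ⋯ + P⁽ᵈ⁾` of the permutation matrices of `σ 0, …, σ (d-1)`. -/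
def sumPermN (n d : ℕ) (σ : Fin d → Equiv.Perm (Fin n)) : Matrix (Fin n) (Fin n) ℕ :=
  ∑ q : Fin d, permMatrixN n (σ q)

/-- The weight `A_i = A_{i₁,i₂}·A_{i₂,i₃}⋯A_{i_k,i₁}` of the cyclic path `i`. -/
def pathWeight {n k : ℕ} [NeZero k] (M : Matrix (Fin n) (Fin n) ℕ) (i : Fin k → Fin n) : ℕ :=
  ∏ t : Fin k, M (i t) (i (t + 1))

/-- The number `v(i)` of distinct vertices visited by the tuple `i`. -/
def numVertices {n k : ℕ} (i : Fin k → Fin n) : ℕ :=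
  (Finset.univ.image i).card

/-- The number `e(i)` of distinct edges `(i_t, i_{t+1})` (cyclically) of the tuple `i`. -/
def numEdges {n k : ℕ} [NeZero k] (i : Fin k → Fin n) : ℕ :=
  (Finset.univ.image (fun t : Fin k => (i t, i (t + 1)))).card

/-- `R_k = Σ_{i : v(i) = e(i)} A_i·1{A_i > 1}`. -/
def Rterm (n d k : ℕ) [NeZero k] (σ : Fin d → Equiv.Perm (Fin n)) : ℕ :=
  ∑ i ∈ Finset.univ.filter (fun i : Fin k → Fin n => numVertices i = numEdges i),
    if 1 < pathWeight (sumPermN n d σ) i then pathWeight (sumPermN n d σ) i else 0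

/-- `S_k = Σ_{i : v(i) < e(i)} A_i`. -/
def Sterm (n d k : ℕ) [NeZero k] (σ : Fin d → Equiv.Perm (Fin n)) : ℕ :=
  ∑ i ∈ Finset.univ.filter (fun i : Fin k → Fin n => numVertices i < numEdges i),
    pathWeight (sumPermN n d σ) i

-- counting permutations satisfying a set of constraints
lemma card_perm_constraints {n : ℕ} (S : Finset (Fin n × Fin n)) :
    (Finset.univ.filter (fun τ : Equiv.Perm (Fin n) => ∀ p ∈ S, τ p.1 = p.2)).card
      ≤ (n - S.card).factorial := by
  set F := Finset.univ.filter (fun τ : Equiv.Perm (Fin n) => ∀ p ∈ S, τ p.1 = p.2) with hF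
  rcases F.eq_empty_or_nonempty with h | ⟨σ0, hσ0⟩
  · simp [h]
  · have hσ0' : ∀ p ∈ S, σ0 p.1 = p.2 := (Finset.mem_filter.1 hσ0).2
    set A := S.image Prod.fst with hA
    have hAcard : A.card = S.card := by
      apply Finset.card_image_of_injOn
      intro p hp p' hp' hpp
      have : p.2 = p'.2 := by rw [← hσ0' p hp, ← hσ0' p' hp', hpp]
      exact Prod.ext hpp this
    have hsub : F.card ≤ (Finset.univ.filter (fun τ : Equiv.Perm (Fin n) => ∀ a ∈ A, τ a = a)).card := by
      apply Finset.card_le_card_of_injOn (fun τ => σ0⁻¹ * τ)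
      · intro τ hτ
        have hτ' : ∀ p ∈ S, τ p.1 = p.2 := (Finset.mem_filter.1 hτ).2
        simp only [Finset.mem_coe, Finset.mem_filter, Finset.mem_univ, true_and]
        intro a ha
        obtain ⟨p, hp, hpa⟩ := Finset.mem_image.1 ha
        subst hpa
        simp [Equiv.Perm.mul_apply, hτ' p hp, ← hσ0' p hp]
      · intro τ _ τ' _ h
        exact mul_left_cancel h
    have hcount : (Finset.univ.filter (fun τ : Equiv.Perm (Fin n) => ∀ a ∈ A, τ a = a)).card
        = (n - A.card).factorial := by
      have h1 : (Finset.univ.filter (fun τ : Equiv.Perm (Fin n) => ∀ a ∈ A, τ a = a)).card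
          = Fintype.card {τ : Equiv.Perm (Fin n) // ∀ a, ¬ (a ∉ A) → τ a = a} := by
        rw [Fintype.card_subtype]
        apply Finset.card_bij (fun a _ => a) <;> simp
      rw [h1, ← Fintype.card_congr (Equiv.Perm.subtypeEquivSubtypePerm (fun a => a ∉ A)),
        Fintype.card_perm]
      congr 1
      rw [Fintype.card_subtype]
      have : Finset.univ.filter (fun a : Fin n => a ∉ A) = Aᶜ := by
        ext a; simp
      rw [this, Finset.card_compl, Fintype.card_fin]
    rw [hcount, hAcard] at hsub
    exact hsub

lemma card_constraint_family {n d : ℕ} (S : Fin d → Finset (Fin n × Fin n)) :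
    ((Finset.univ.filter (fun σ : Fin d → Equiv.Perm (Fin n) =>
        ∀ q, ∀ p ∈ S q, σ q p.1 = p.2)).card)
      ≤ ∏ q, (n - (S q).card).factorial := by
  have hsub : (Finset.univ.filter (fun σ : Fin d → Equiv.Perm (Fin n) =>
        ∀ q, ∀ p ∈ S q, σ q p.1 = p.2))
      ⊆ Fintype.piFinset (fun q => Finset.univ.filter
          (fun τ : Equiv.Perm (Fin n) => ∀ p ∈ S q, τ p.1 = p.2)) := by
    intro σ hσ
    rw [Fintype.mem_piFinset]
    intro q
    simp only [Finset.mem_filter, Finset.mem_univ, true_and] at hσ ⊢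
    exact hσ q
  calc (Finset.univ.filter (fun σ : Fin d → Equiv.Perm (Fin n) =>
        ∀ q, ∀ p ∈ S q, σ q p.1 = p.2)).card
      ≤ (Fintype.piFinset (fun q => Finset.univ.filter
          (fun τ : Equiv.Perm (Fin n) => ∀ p ∈ S q, τ p.1 = p.2))).card :=
        Finset.card_le_card hsub
    _ = ∏ q, (Finset.univ.filter
          (fun τ : Equiv.Perm (Fin n) => ∀ p ∈ S q, τ p.1 = p.2)).card :=
        Fintype.card_piFinset _
    _ ≤ ∏ q, (n - (S q).card).factorial :=
        Finset.prod_le_prod' fun q _ => card_perm_constraints _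

lemma fact_bound {n m : ℕ} (h : 2 * m ≤ n) :
    (n - m).factorial * n ^ m ≤ 2 ^ m * n.factorial := by
  have hm : m ≤ n := le_trans (by omega) h
  have h1 : n ^ m ≤ 2 ^ m * (n - m) ^ m := by
    rw [← mul_pow]
    exact Nat.pow_le_pow_left (by omega) m
  have h2 : (n - m) ^ m ≤ n.descFactorial m := by
    calc (n - m) ^ m ≤ (n + 1 - m) ^ m := Nat.pow_le_pow_left (by omega) m
    _ ≤ n.descFactorial m := Nat.pow_sub_le_descFactorial n m
  calc (n - m).factorial * n ^ m ≤ (n - m).factorial * (2 ^ m * (n - m) ^ m) :=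
        Nat.mul_le_mul_left _ h1
    _ = 2 ^ m * ((n - m).factorial * (n - m) ^ m) := by ring
    _ ≤ 2 ^ m * ((n - m).factorial * n.descFactorial m) :=
        Nat.mul_le_mul_left _ (Nat.mul_le_mul_left _ h2)
    _ = 2 ^ m * n.factorial := by rw [Nat.factorial_mul_descFactorial hm]

lemma fact_bound_real {n m : ℕ} (hn : 0 < n) (h : 2 * m ≤ n) :
    ((n - m).factorial : ℝ) ≤ (n.factorial : ℝ) * (2 / n) ^ m := by
  have hn' : (0:ℝ) < (n:ℝ) ^ m := by positivity
  rw [div_pow, ← mul_div_assoc, le_div_iff₀ hn']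
  calc ((n - m).factorial : ℝ) * (n:ℝ) ^ m = (((n-m).factorial * n ^ m : ℕ) : ℝ) := by
        push_cast; ring
    _ ≤ ((2 ^ m * n.factorial : ℕ) : ℝ) := by exact_mod_cast Nat.cast_le.mpr (fact_bound h)
    _ = (n.factorial : ℝ) * 2 ^ m := by push_cast; ring

lemma count_family_real {n d : ℕ} (hn : 0 < n) (S : Fin d → Finset (Fin n × Fin n))
    (hS : ∀ q, 2 * (S q).card ≤ n) :
    (((Finset.univ.filter (fun σ : Fin d → Equiv.Perm (Fin n) =>
        ∀ q, ∀ p ∈ S q, σ q p.1 = p.2)).card : ℝ))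
      ≤ (n.factorial : ℝ) ^ d * (2 / n) ^ (∑ q, (S q).card) := by
  calc (((Finset.univ.filter (fun σ : Fin d → Equiv.Perm (Fin n) =>
        ∀ q, ∀ p ∈ S q, σ q p.1 = p.2)).card : ℝ))
      ≤ ((∏ q, (n - (S q).card).factorial : ℕ) : ℝ) := by
        exact_mod_cast Nat.cast_le.mpr (card_constraint_family S)
    _ = ∏ q, ((n - (S q).card).factorial : ℝ) := by push_cast; rfl
    _ ≤ ∏ q : Fin d, ((n.factorial : ℝ) * (2 / n) ^ (S q).card) := by
        apply Finset.prod_le_prod (fun q _ => by positivity)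
        exact fun q _ => fact_bound_real hn (hS q)
    _ = (n.factorial : ℝ) ^ d * (2 / n) ^ (∑ q, (S q).card) := by
        rw [Finset.prod_mul_distrib, Finset.prod_const, Finset.card_univ, Fintype.card_fin,
          Finset.prod_pow_eq_pow_sum]

lemma numVertices_le_numEdges {n k : ℕ} [NeZero k] (i : Fin k → Fin n) :
    numVertices i ≤ numEdges i := by
  have h : Finset.univ.image i
      = (Finset.univ.image (fun t : Fin k => (i t, i (t + 1)))).image Prod.fst := by
    rw [Finset.image_image]; rfl
  rw [numVertices, h, numEdges]
  exact Finset.card_image_le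

section percover
variable {n d k : ℕ} [NeZero k]

/-- The edge set of colour `q` under colouring `c`. -/
noncomputable def Tset (i : Fin k → Fin n) (c : Fin k → Fin d) (q : Fin d) :
    Finset (Fin n × Fin n) :=
  (Finset.univ.filter (fun t => c t = q)).image (fun t : Fin k => (i t, i (t + 1)))

lemma Tset_card_le (i : Fin k → Fin n) (c : Fin k → Fin d) (q : Fin d) :
    (Tset i c q).card ≤ k :=
  le_trans Finset.card_image_le (le_trans (Finset.card_filter_le _ _)
    (by simp))

lemma numEdges_le_sum_Tset (i : Fin k → Fin n) (c : Fin k → Fin d) :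
    numEdges i ≤ ∑ q, (Tset i c q).card := by
  have hsub : Finset.univ.image (fun t : Fin k => (i t, i (t + 1)))
      ⊆ Finset.univ.biUnion (fun q => Tset i c q) := by
    intro p hp
    obtain ⟨t, _, rfl⟩ := Finset.mem_image.1 hp
    exact Finset.mem_biUnion.2 ⟨c t, Finset.mem_univ _,
      Finset.mem_image.2 ⟨t, Finset.mem_filter.2 ⟨Finset.mem_univ _, rfl⟩, rfl⟩⟩
  exact le_trans (Finset.card_le_card hsub) (Finset.card_biUnion_le)

lemma cover_card (hn : 2 * (k + 1) ≤ n) (i : Fin k → Fin n) :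
    (((Finset.univ.filter (fun σ : Fin d → Equiv.Perm (Fin n) =>
        ∀ t, ∃ q, σ q (i t) = i (t + 1))).card : ℝ))
      ≤ (d : ℝ) ^ k * (n.factorial : ℝ) ^ d * (2 / n) ^ (numEdges i) := by
  have hn0 : 0 < n := by omega
  have h2n : (2 : ℝ) / n ≤ 1 := by
    rw [div_le_one (by exact_mod_cast hn0)]
    exact_mod_cast (by omega : 2 ≤ n)
  have h2n0 : (0:ℝ) ≤ 2 / n := by positivity
  -- union bound over colourings
  have hsub : (Finset.univ.filter (fun σ : Fin d → Equiv.Perm (Fin n) =>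
        ∀ t, ∃ q, σ q (i t) = i (t + 1)))
      ⊆ (Finset.univ : Finset (Fin k → Fin d)).biUnion (fun c =>
          Finset.univ.filter (fun σ : Fin d → Equiv.Perm (Fin n) =>
            ∀ q, ∀ p ∈ Tset i c q, σ q p.1 = p.2)) := by
    intro σ hσ
    have hσ' : ∀ t, ∃ q, σ q (i t) = i (t + 1) := (Finset.mem_filter.1 hσ).2
    refine Finset.mem_biUnion.2 ⟨fun t => (hσ' t).choose, Finset.mem_univ _, ?_⟩
    simp only [Finset.mem_filter, Finset.mem_univ, true_and]
    intro q p hp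
    obtain ⟨t, ht, rfl⟩ := Finset.mem_image.1 hp
    have hq : (fun t => (hσ' t).choose) t = q := (Finset.mem_filter.1 ht).2
    rw [← hq]
    exact (hσ' t).choose_spec
  calc (((Finset.univ.filter (fun σ : Fin d → Equiv.Perm (Fin n) =>
        ∀ t, ∃ q, σ q (i t) = i (t + 1))).card : ℝ))
      ≤ ((((Finset.univ : Finset (Fin k → Fin d)).biUnion (fun c =>
          Finset.univ.filter (fun σ : Fin d → Equiv.Perm (Fin n) =>
            ∀ q, ∀ p ∈ Tset i c q, σ q p.1 = p.2))).card : ℝ)) := by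
        exact_mod_cast Nat.cast_le.mpr (Finset.card_le_card hsub)
    _ ≤ ∑ c : Fin k → Fin d, (((Finset.univ.filter (fun σ : Fin d → Equiv.Perm (Fin n) =>
            ∀ q, ∀ p ∈ Tset i c q, σ q p.1 = p.2)).card : ℝ)) := by
        exact_mod_cast Nat.cast_le.mpr Finset.card_biUnion_le
    _ ≤ ∑ _c : Fin k → Fin d, (n.factorial : ℝ) ^ d * (2 / n) ^ (numEdges i) := by
        apply Finset.sum_le_sum
        intro c _
        calc (((Finset.univ.filter (fun σ : Fin d → Equiv.Perm (Fin n) =>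
            ∀ q, ∀ p ∈ Tset i c q, σ q p.1 = p.2)).card : ℝ))
            ≤ (n.factorial : ℝ) ^ d * (2 / n) ^ (∑ q, (Tset i c q).card) :=
              count_family_real hn0 _ (fun q => by
                have := Tset_card_le i c q; omega)
          _ ≤ (n.factorial : ℝ) ^ d * (2 / n) ^ (numEdges i) := by
              apply mul_le_mul_of_nonneg_left _ (by positivity)
              exact pow_le_pow_of_le_one h2n0 h2n (numEdges_le_sum_Tset i c)
    _ = (d : ℝ) ^ k * (n.factorial : ℝ) ^ d * (2 / n) ^ (numEdges i) := by
        rw [Finset.sum_const, Finset.card_univ]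
        simp [Fintype.card_fun, mul_assoc]
end percover

section bad2
variable {n d k : ℕ} [NeZero k]

noncomputable def S2set (i : Fin k → Fin n) (t0 : Fin k) (q' : Fin d) (c : Fin k → Fin d)
    (q : Fin d) : Finset (Fin n × Fin n) :=
  Tset i c q ∪ (if q = q' then {(i t0, i (t0 + 1))} else ∅)

lemma bad2_card (hn : 2 * (k + 1) ≤ n) (i : Fin k → Fin n) :
    (((Finset.univ.filter (fun σ : Fin d → Equiv.Perm (Fin n) =>
        (∀ t, ∃ q, σ q (i t) = i (t + 1)) ∧
        ∃ t0 q q', q ≠ q' ∧ σ q (i t0) = i (t0 + 1) ∧ σ q' (i t0) = i (t0 + 1))).card : ℝ))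
      ≤ (k : ℝ) * (d : ℝ) ^ (k + 1) * (n.factorial : ℝ) ^ d * (2 / n) ^ (numEdges i + 1) := by
  have hn0 : 0 < n := by omega
  have h2n : (2 : ℝ) / n ≤ 1 := by
    rw [div_le_one (by exact_mod_cast hn0)]
    exact_mod_cast (by omega : 2 ≤ n)
  have h2n0 : (0:ℝ) ≤ 2 / n := by positivity
  set I : Finset ((Fin k × Fin d) × (Fin k → Fin d)) :=
    Finset.univ.filter (fun x => ∀ t, (i t, i (t + 1)) = (i x.1.1, i (x.1.1 + 1)) → x.2 t ≠ x.1.2)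
    with hI
  -- subset of a bounded union
  have hsub : (Finset.univ.filter (fun σ : Fin d → Equiv.Perm (Fin n) =>
        (∀ t, ∃ q, σ q (i t) = i (t + 1)) ∧
        ∃ t0 q q', q ≠ q' ∧ σ q (i t0) = i (t0 + 1) ∧ σ q' (i t0) = i (t0 + 1)))
      ⊆ I.biUnion (fun x =>
          Finset.univ.filter (fun σ : Fin d → Equiv.Perm (Fin n) =>
            ∀ q, ∀ p ∈ S2set i x.1.1 x.1.2 x.2 q, σ q p.1 = p.2)) := by
    intro σ hσ
    obtain ⟨hcov, t0, q, q', hne, hq, hq'⟩ := (Finset.mem_filter.1 hσ).2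
    set c : Fin k → Fin d :=
      fun t => if (i t, i (t + 1)) = (i t0, i (t0 + 1)) then q else (hcov t).choose with hc
    have hcmem : ((t0, q'), c) ∈ I := by
      rw [hI]
      simp only [Finset.mem_filter, Finset.mem_univ, true_and]
      intro t ht
      rw [hc]
      simp only [ht, if_pos]
      exact hne
    refine Finset.mem_biUnion.2 ⟨((t0, q'), c), hcmem, ?_⟩
    simp only [Finset.mem_filter, Finset.mem_univ, true_and]
    intro qq p hp
    rcases Finset.mem_union.1 hp with hp | hp
    · obtain ⟨t, ht, rfl⟩ := Finset.mem_image.1 hp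
      have hct : c t = qq := (Finset.mem_filter.1 ht).2
      by_cases he : (i t, i (t + 1)) = (i t0, i (t0 + 1))
      · have h1 : i t = i t0 := congrArg Prod.fst he
        have h2 : i (t + 1) = i (t0 + 1) := congrArg Prod.snd he
        have : c t = q := by rw [hc]; simp [he]
        rw [← hct, this]
        show σ q (i t) = i (t + 1)
        rw [h1, h2]; exact hq
      · have : c t = (hcov t).choose := by rw [hc]; simp [he]
        rw [← hct, this]
        exact (hcov t).choose_spec
    · by_cases hqq : qq = q'
      · rw [hqq]
        have : p = (i t0, i (t0 + 1)) := by
          simpa [hqq] using hp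
        rw [this]
        exact hq'
      · exfalso; simpa [hqq] using hp
  -- per-index bound
  have hper : ∀ x ∈ I,
      (((Finset.univ.filter (fun σ : Fin d → Equiv.Perm (Fin n) =>
          ∀ q, ∀ p ∈ S2set i x.1.1 x.1.2 x.2 q, σ q p.1 = p.2)).card : ℝ))
        ≤ (n.factorial : ℝ) ^ d * (2 / n) ^ (numEdges i + 1) := by
    intro x hx
    obtain ⟨⟨t0, q'⟩, c⟩ := x
    simp only [hI, Finset.mem_filter, Finset.mem_univ, true_and] at hx
    have hcard : ∀ q, (S2set i t0 q' c q).card ≤ k + 1 := by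
      intro q
      refine le_trans (Finset.card_union_le _ _) ?_
      have h1 := Tset_card_le i c q
      have h2 : (if q = q' then ({(i t0, i (t0 + 1))} : Finset (Fin n × Fin n)) else ∅).card ≤ 1 := by
        split <;> simp
      omega
    have hsumcard : numEdges i + 1 ≤ ∑ q, (S2set i t0 q' c q).card := by
      have hnotmem : (i t0, i (t0 + 1)) ∉ Tset i c q' := by
        intro hmem
        obtain ⟨t, ht, he⟩ := Finset.mem_image.1 hmem
        exact (hx t he) (Finset.mem_filter.1 ht).2
      have heq : ∀ q, (S2set i t0 q' c q).card
          = (Tset i c q).card + (if q = q' then 1 else 0) := by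
        intro q
        by_cases hq : q = q'
        · subst hq
          rw [S2set, if_pos rfl, Finset.card_union_of_disjoint (by simpa using hnotmem)]
          simp
        · rw [S2set, if_neg hq]
          simp [hq]
      rw [Finset.sum_congr rfl (fun q _ => heq q), Finset.sum_add_distrib]
      have h1 := numEdges_le_sum_Tset i c
      have h2 : (∑ q : Fin d, if q = q' then 1 else 0) = 1 := by
        simp
      omega
    calc (((Finset.univ.filter (fun σ : Fin d → Equiv.Perm (Fin n) =>
          ∀ q, ∀ p ∈ S2set i t0 q' c q, σ q p.1 = p.2)).card : ℝ))
        ≤ (n.factorial : ℝ) ^ d * (2 / n) ^ (∑ q, (S2set i t0 q' c q).card) :=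
          count_family_real hn0 _ (fun q => by have := hcard q; omega)
      _ ≤ (n.factorial : ℝ) ^ d * (2 / n) ^ (numEdges i + 1) := by
          apply mul_le_mul_of_nonneg_left _ (by positivity)
          exact pow_le_pow_of_le_one h2n0 h2n hsumcard
  calc (((Finset.univ.filter (fun σ : Fin d → Equiv.Perm (Fin n) =>
        (∀ t, ∃ q, σ q (i t) = i (t + 1)) ∧
        ∃ t0 q q', q ≠ q' ∧ σ q (i t0) = i (t0 + 1) ∧ σ q' (i t0) = i (t0 + 1))).card : ℝ))
      ≤ ((I.biUnion (fun x =>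
          Finset.univ.filter (fun σ : Fin d → Equiv.Perm (Fin n) =>
            ∀ q, ∀ p ∈ S2set i x.1.1 x.1.2 x.2 q, σ q p.1 = p.2))).card : ℝ) := by
        exact_mod_cast Nat.cast_le.mpr (Finset.card_le_card hsub)
    _ ≤ ∑ x ∈ I, (((Finset.univ.filter (fun σ : Fin d → Equiv.Perm (Fin n) =>
            ∀ q, ∀ p ∈ S2set i x.1.1 x.1.2 x.2 q, σ q p.1 = p.2)).card : ℝ)) := by
        exact_mod_cast Nat.cast_le.mpr Finset.card_biUnion_le
    _ ≤ ∑ _x ∈ I, (n.factorial : ℝ) ^ d * (2 / n) ^ (numEdges i + 1) :=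
        Finset.sum_le_sum hper
    _ ≤ (k : ℝ) * (d : ℝ) ^ (k + 1) * (n.factorial : ℝ) ^ d * (2 / n) ^ (numEdges i + 1) := by
        rw [Finset.sum_const, nsmul_eq_mul]
        have hIcard : (I.card : ℝ) ≤ (k : ℝ) * (d : ℝ) ^ (k + 1) := by
          have h1 : I.card ≤ k * (d * d ^ k) := by
            refine le_trans (Finset.card_le_card (Finset.filter_subset _ _)) ?_
            rw [Finset.card_univ]
            simp [Fintype.card_fun, mul_assoc]
          calc (I.card : ℝ) ≤ ((k * (d * d ^ k) : ℕ) : ℝ) := by exact_mod_cast h1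
            _ = (k : ℝ) * (d : ℝ) ^ (k + 1) := by push_cast; ring
        rw [mul_assoc ((k:ℝ) * (d:ℝ)^(k+1))]
        exact mul_le_mul_of_nonneg_right hIcard (by positivity)
end bad2

section pw
variable {n d k : ℕ} [NeZero k]

lemma sumPermN_apply (σ : Fin d → Equiv.Perm (Fin n)) (a b : Fin n) :
    sumPermN n d σ a b = (Finset.univ.filter (fun q => σ q a = b)).card := by
  rw [sumPermN]
  rw [show (∑ q : Fin d, permMatrixN n (σ q)) a b = ∑ q : Fin d, permMatrixN n (σ q) a b from by
    simp [Matrix.sum_apply]]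
  simp [permMatrixN, Finset.sum_boole]

lemma sumPermN_le (σ : Fin d → Equiv.Perm (Fin n)) (a b : Fin n) :
    sumPermN n d σ a b ≤ d := by
  rw [sumPermN_apply]
  exact le_trans (Finset.card_filter_le _ _) (by simp)

lemma pathWeight_le (σ : Fin d → Equiv.Perm (Fin n)) (i : Fin k → Fin n) :
    pathWeight (sumPermN n d σ) i ≤ d ^ k := by
  rw [pathWeight]
  calc ∏ t : Fin k, sumPermN n d σ (i t) (i (t + 1)) ≤ ∏ _t : Fin k, d :=
      Finset.prod_le_prod' fun t _ => sumPermN_le σ _ _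
    _ = d ^ k := by simp

lemma pathWeight_cover {σ : Fin d → Equiv.Perm (Fin n)} {i : Fin k → Fin n}
    (h : pathWeight (sumPermN n d σ) i ≠ 0) :
    ∀ t, ∃ q, σ q (i t) = i (t + 1) := by
  intro t
  rw [pathWeight, Finset.prod_ne_zero_iff] at h
  have := h t (Finset.mem_univ t)
  rw [sumPermN_apply] at this
  have : (Finset.univ.filter (fun q => σ q (i t) = i (t + 1))).Nonempty :=
    Finset.card_pos.1 (Nat.pos_of_ne_zero this)
  obtain ⟨q, hq⟩ := this
  exact ⟨q, (Finset.mem_filter.1 hq).2⟩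

lemma pathWeight_double {σ : Fin d → Equiv.Perm (Fin n)} {i : Fin k → Fin n}
    (h : 1 < pathWeight (sumPermN n d σ) i) :
    ∃ t0 q q', q ≠ q' ∧ σ q (i t0) = i (t0 + 1) ∧ σ q' (i t0) = i (t0 + 1) := by
  have h2 : ∃ t0, 1 < sumPermN n d σ (i t0) (i (t0 + 1)) := by
    by_contra hc
    push_neg at hc
    have : pathWeight (sumPermN n d σ) i ≤ 1 := Finset.prod_le_one (fun _ _ => Nat.zero_le _)
      (fun t _ => hc t)
    omega
  obtain ⟨t0, ht0⟩ := h2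
  rw [sumPermN_apply] at ht0
  obtain ⟨q, hq, q', hq', hne⟩ := Finset.one_lt_card.1 ht0
  exact ⟨t0, q, q', hne, (Finset.mem_filter.1 hq).2, (Finset.mem_filter.1 hq').2⟩
end pw

-- tuple counting
lemma card_numVertices_eq {n k m : ℕ} [NeZero k] :
    ((Finset.univ.filter (fun i : Fin k → Fin n => numVertices i = m)).card : ℝ)
      ≤ (k : ℝ) ^ k * (n : ℝ) ^ m := by
  classical
  have hk : 0 < k := Nat.pos_of_ne_zero (NeZero.ne k)
  -- injection into patterns × vertex sets
  set F : (Fin k → Fin n) → (Fin k → Fin k) × Finset (Fin n) := fun i =>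
    (fun t => ⟨((Finset.univ.image i).sort (· ≤ ·)).idxOf (i t), by
      have hmem : i t ∈ (Finset.univ.image i).sort (· ≤ ·) := by
        rw [Finset.mem_sort]
        exact Finset.mem_image_of_mem i (Finset.mem_univ t)
      calc ((Finset.univ.image i).sort (· ≤ ·)).idxOf (i t)
          < ((Finset.univ.image i).sort (· ≤ ·)).length := List.idxOf_lt_length_iff.2 hmem
        _ = (Finset.univ.image i).card := Finset.length_sort _
        _ ≤ k := le_trans Finset.card_image_le (by simp)⟩,
     Finset.univ.image i) with hF
  have hinj : Set.InjOn F
      ((Finset.univ.filter (fun i : Fin k → Fin n => numVertices i = m)) : Set (Fin k → Fin n)) := by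
    intro i _ i' _ h
    have himg : Finset.univ.image i = Finset.univ.image i' := congrArg Prod.snd h
    funext t
    have h1 := congrArg Prod.fst h
    have h2 := congrFun h1 t
    have h3 : ((Finset.univ.image i).sort (· ≤ ·)).idxOf (i t)
        = ((Finset.univ.image i').sort (· ≤ ·)).idxOf (i' t) := congrArg Fin.val h2
    rw [← himg] at h3
    set l := (Finset.univ.image i).sort (· ≤ ·) with hl
    have hm1 : i t ∈ l := by rw [hl, Finset.mem_sort]; exact Finset.mem_image_of_mem i (Finset.mem_univ t)
    have hm2 : i' t ∈ l := by
      rw [hl, himg, Finset.mem_sort]; exact Finset.mem_image_of_mem i' (Finset.mem_univ t)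
    have e1 : l[l.idxOf (i t)]'(List.idxOf_lt_length_iff.2 hm1) = i t := List.getElem_idxOf _
    have e2 : l[l.idxOf (i' t)]'(List.idxOf_lt_length_iff.2 hm2) = i' t := List.getElem_idxOf _
    rw [← e1, ← e2]
    congr 1
  have hmaps : ∀ i ∈ (Finset.univ.filter (fun i : Fin k → Fin n => numVertices i = m)),
      F i ∈ (Finset.univ : Finset (Fin k → Fin k)) ×ˢ (Finset.univ.powersetCard m) := by
    intro i hi
    rw [Finset.mem_product]
    refine ⟨Finset.mem_univ _, ?_⟩
    rw [Finset.mem_powersetCard]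
    exact ⟨Finset.subset_univ _, (Finset.mem_filter.1 hi).2⟩
  have hcard := Finset.card_le_card_of_injOn F (by intro i hi; exact hmaps i hi) hinj
  rw [Finset.card_product, Finset.card_univ, Finset.card_powersetCard, Finset.card_univ,
    Fintype.card_fin] at hcard
  calc ((Finset.univ.filter (fun i : Fin k → Fin n => numVertices i = m)).card : ℝ)
      ≤ ((Fintype.card (Fin k → Fin k) * n.choose m : ℕ) : ℝ) := by exact_mod_cast hcard
    _ ≤ (k : ℝ) ^ k * (n : ℝ) ^ m := by
        push_cast
        apply mul_le_mul
        · rw [Fintype.card_fun]; simp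
        · exact_mod_cast Nat.choose_le_pow n m
        · positivity
        · positivity

lemma sum_pow_numVertices {n k : ℕ} [NeZero k] (hn : 0 < n) {x : ℝ} (hx0 : 0 ≤ x)
    (hx : x * n ≤ 2) :
    ∑ i : Fin k → Fin n, x ^ (numVertices i) ≤ (k : ℝ) ^ k * 2 ^ (k + 1) := by
  have hv : ∀ i : Fin k → Fin n, numVertices i ∈ Finset.range (k + 1) := by
    intro i
    rw [Finset.mem_range, Nat.lt_succ_iff, numVertices]
    exact le_trans Finset.card_image_le (by simp)
  have hsplit : ∑ i : Fin k → Fin n, x ^ (numVertices i)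
      = ∑ m ∈ Finset.range (k + 1),
          ∑ i ∈ Finset.univ.filter (fun i : Fin k → Fin n => numVertices i = m),
            x ^ (numVertices i) := by
    rw [Finset.sum_fiberwise_eq_sum_filter]
    congr 1
    rw [Finset.filter_true_of_mem (fun i _ => hv i)]
  rw [hsplit]
  calc ∑ m ∈ Finset.range (k + 1),
          ∑ i ∈ Finset.univ.filter (fun i : Fin k → Fin n => numVertices i = m),
            x ^ (numVertices i)
      = ∑ m ∈ Finset.range (k + 1),
          ((Finset.univ.filter (fun i : Fin k → Fin n => numVertices i = m)).card : ℝ) * x ^ m := by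
        apply Finset.sum_congr rfl
        intro m _
        rw [Finset.sum_congr rfl (fun i hi => by
          rw [(Finset.mem_filter.1 hi).2]), Finset.sum_const, nsmul_eq_mul]
    _ ≤ ∑ m ∈ Finset.range (k + 1), (k : ℝ) ^ k * 2 ^ m := by
        apply Finset.sum_le_sum
        intro m _
        calc ((Finset.univ.filter (fun i : Fin k → Fin n => numVertices i = m)).card : ℝ) * x ^ m
            ≤ ((k : ℝ) ^ k * (n : ℝ) ^ m) * x ^ m :=
              mul_le_mul_of_nonneg_right card_numVertices_eq (by positivity)
          _ = (k : ℝ) ^ k * (x * n) ^ m := by rw [mul_pow]; ring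
          _ ≤ (k : ℝ) ^ k * 2 ^ m := by
              apply mul_le_mul_of_nonneg_left _ (by positivity)
              exact pow_le_pow_left₀ (by positivity) hx m
    _ = (k : ℝ) ^ k * ∑ m ∈ Finset.range (k + 1), 2 ^ m := by rw [Finset.mul_sum]
    _ ≤ (k : ℝ) ^ k * 2 ^ (k + 1) := by
        apply mul_le_mul_of_nonneg_left _ (by positivity)
        have := geom_sum_eq (show (2:ℝ) ≠ 1 by norm_num) (k+1)
        rw [this]
        norm_num

-- Markov
lemma markov_pr {Ω : Type*} [Fintype Ω] (X : Ω → ℕ) {ε : ℝ} (hε : 0 < ε) :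
    ((Finset.univ.filter (fun ω : Ω => ε ≤ (X ω : ℝ))).card : ℝ)
      ≤ (∑ ω : Ω, (X ω : ℝ)) / ε := by
  rw [le_div_iff₀ hε]
  calc ((Finset.univ.filter (fun ω : Ω => ε ≤ (X ω : ℝ))).card : ℝ) * ε
      = ∑ _ω ∈ Finset.univ.filter (fun ω : Ω => ε ≤ (X ω : ℝ)), ε := by
        rw [Finset.sum_const, nsmul_eq_mul]
    _ ≤ ∑ ω ∈ Finset.univ.filter (fun ω : Ω => ε ≤ (X ω : ℝ)), (X ω : ℝ) :=
        Finset.sum_le_sum (fun ω hω => (Finset.mem_filter.1 hω).2)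
    _ ≤ ∑ ω : Ω, (X ω : ℝ) :=
        Finset.sum_le_sum_of_subset_of_nonneg (Finset.filter_subset _ _)
          (fun ω _ _ => by positivity)

section main
variable {k : ℕ} [NeZero k]

lemma S_expectation {n dd : ℕ} (hn : 2 * (k + 1) ≤ n) :
    (∑ σ : Fin dd → Equiv.Perm (Fin n), ((Sterm n dd k σ : ℕ) : ℝ))
      ≤ (n.factorial : ℝ) ^ dd * ((dd : ℝ) ^ (2 * k) * (2 / n)
          * ((k : ℝ) ^ k * 2 ^ (k + 1))) := by
  have hn0 : 0 < n := by omega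
  have h2n : (2 : ℝ) / n ≤ 1 := by
    rw [div_le_one (by exact_mod_cast hn0)]
    exact_mod_cast (by omega : 2 ≤ n)
  have h2n0 : (0:ℝ) ≤ 2 / n := by positivity
  have hswap : (∑ σ : Fin dd → Equiv.Perm (Fin n), ((Sterm n dd k σ : ℕ) : ℝ))
      = ∑ i ∈ Finset.univ.filter (fun i : Fin k → Fin n => numVertices i < numEdges i),
          ∑ σ : Fin dd → Equiv.Perm (Fin n), ((pathWeight (sumPermN n dd σ) i : ℕ) : ℝ) := by
    rw [← Finset.sum_comm]
    apply Finset.sum_congr rfl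
    intro σ _
    rw [Sterm]
    push_cast
    rfl
  rw [hswap]
  have hterm : ∀ i ∈ Finset.univ.filter (fun i : Fin k → Fin n => numVertices i < numEdges i),
      (∑ σ : Fin dd → Equiv.Perm (Fin n), ((pathWeight (sumPermN n dd σ) i : ℕ) : ℝ))
        ≤ (n.factorial : ℝ) ^ dd * ((dd : ℝ) ^ (2 * k) * (2 / n) ^ (numVertices i + 1)) := by
    intro i hi
    have hve : numVertices i < numEdges i := (Finset.mem_filter.1 hi).2
    have hzero : ∀ σ ∈ (Finset.univ : Finset (Fin dd → Equiv.Perm (Fin n))),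
        σ ∉ Finset.univ.filter (fun σ : Fin dd → Equiv.Perm (Fin n) =>
          ∀ t, ∃ q, σ q (i t) = i (t + 1)) →
        ((pathWeight (sumPermN n dd σ) i : ℕ) : ℝ) = 0 := by
      intro σ _ hσ
      simp only [Finset.mem_filter, Finset.mem_univ, true_and] at hσ
      by_contra hne
      exact hσ (pathWeight_cover (fun h0 => hne (by rw [h0]; norm_num)))
    calc (∑ σ : Fin dd → Equiv.Perm (Fin n), ((pathWeight (sumPermN n dd σ) i : ℕ) : ℝ))
        = ∑ σ ∈ Finset.univ.filter (fun σ : Fin dd → Equiv.Perm (Fin n) =>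
            ∀ t, ∃ q, σ q (i t) = i (t + 1)), ((pathWeight (sumPermN n dd σ) i : ℕ) : ℝ) :=
          (Finset.sum_subset (Finset.filter_subset _ _) hzero).symm
      _ ≤ ∑ _σ ∈ Finset.univ.filter (fun σ : Fin dd → Equiv.Perm (Fin n) =>
            ∀ t, ∃ q, σ q (i t) = i (t + 1)), ((dd : ℝ) ^ k) := by
          apply Finset.sum_le_sum
          intro σ _
          exact_mod_cast Nat.cast_le.mpr (pathWeight_le σ i)
      _ = (((Finset.univ.filter (fun σ : Fin dd → Equiv.Perm (Fin n) =>
            ∀ t, ∃ q, σ q (i t) = i (t + 1))).card : ℝ)) * (dd : ℝ) ^ k := by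
          rw [Finset.sum_const, nsmul_eq_mul]
      _ ≤ ((dd : ℝ) ^ k * (n.factorial : ℝ) ^ dd * (2 / n) ^ (numEdges i)) * (dd : ℝ) ^ k := by
          apply mul_le_mul_of_nonneg_right (cover_card hn i) (by positivity)
      _ ≤ (n.factorial : ℝ) ^ dd * ((dd : ℝ) ^ (2 * k) * (2 / n) ^ (numVertices i + 1)) := by
          have hpow : ((2:ℝ) / n) ^ (numEdges i) ≤ (2 / n) ^ (numVertices i + 1) :=
            pow_le_pow_of_le_one h2n0 h2n (by omega)
          calc ((dd : ℝ) ^ k * (n.factorial : ℝ) ^ dd * (2 / n) ^ (numEdges i)) * (dd : ℝ) ^ k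
              ≤ ((dd : ℝ) ^ k * (n.factorial : ℝ) ^ dd * (2 / n) ^ (numVertices i + 1))
                  * (dd : ℝ) ^ k := by
                apply mul_le_mul_of_nonneg_right _ (by positivity)
                apply mul_le_mul_of_nonneg_left hpow (by positivity)
            _ = (n.factorial : ℝ) ^ dd * ((dd : ℝ) ^ (2 * k) * (2 / n) ^ (numVertices i + 1)) := by
                rw [two_mul, pow_add]; ring
  calc (∑ i ∈ Finset.univ.filter (fun i : Fin k → Fin n => numVertices i < numEdges i),
          ∑ σ : Fin dd → Equiv.Perm (Fin n), ((pathWeight (sumPermN n dd σ) i : ℕ) : ℝ))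
      ≤ ∑ i ∈ Finset.univ.filter (fun i : Fin k → Fin n => numVertices i < numEdges i),
          (n.factorial : ℝ) ^ dd * ((dd : ℝ) ^ (2 * k) * (2 / n) ^ (numVertices i + 1)) :=
        Finset.sum_le_sum hterm
    _ ≤ ∑ i : Fin k → Fin n,
          (n.factorial : ℝ) ^ dd * ((dd : ℝ) ^ (2 * k) * (2 / n) ^ (numVertices i + 1)) :=
        Finset.sum_le_sum_of_subset_of_nonneg (Finset.filter_subset _ _)
          (fun i _ _ => by positivity)
    _ ≤ (n.factorial : ℝ) ^ dd * ((dd : ℝ) ^ (2 * k) * (2 / n)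
          * ((k : ℝ) ^ k * 2 ^ (k + 1))) := by
        have : ∑ i : Fin k → Fin n,
            (n.factorial : ℝ) ^ dd * ((dd : ℝ) ^ (2 * k) * (2 / n) ^ (numVertices i + 1))
            = (n.factorial : ℝ) ^ dd * ((dd : ℝ) ^ (2 * k) * (2 / n))
              * ∑ i : Fin k → Fin n, ((2:ℝ) / n) ^ (numVertices i) := by
          rw [Finset.mul_sum]
          apply Finset.sum_congr rfl
          intro i _
          rw [pow_succ]
          ring
        rw [this]
        have hsum := sum_pow_numVertices (k := k) hn0 h2n0
          (by rw [div_mul_eq_mul_div, mul_div_assoc]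
              have : (n:ℝ) ≠ 0 := by positivity
              rw [div_self this, mul_one])
        calc (n.factorial : ℝ) ^ dd * ((dd : ℝ) ^ (2 * k) * (2 / n))
              * ∑ i : Fin k → Fin n, ((2:ℝ) / n) ^ (numVertices i)
            ≤ (n.factorial : ℝ) ^ dd * ((dd : ℝ) ^ (2 * k) * (2 / n))
              * ((k : ℝ) ^ k * 2 ^ (k + 1)) := by
              apply mul_le_mul_of_nonneg_left hsum (by positivity)
          _ = (n.factorial : ℝ) ^ dd * ((dd : ℝ) ^ (2 * k) * (2 / n)
              * ((k : ℝ) ^ k * 2 ^ (k + 1))) := by ring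

lemma R_expectation {n dd : ℕ} (hn : 2 * (k + 1) ≤ n) :
    (∑ σ : Fin dd → Equiv.Perm (Fin n), ((Rterm n dd k σ : ℕ) : ℝ))
      ≤ (n.factorial : ℝ) ^ dd * ((k : ℝ) * (dd : ℝ) ^ (2 * k + 1) * (2 / n)
          * ((k : ℝ) ^ k * 2 ^ (k + 1))) := by
  have hn0 : 0 < n := by omega
  have h2n : (2 : ℝ) / n ≤ 1 := by
    rw [div_le_one (by exact_mod_cast hn0)]
    exact_mod_cast (by omega : 2 ≤ n)
  have h2n0 : (0:ℝ) ≤ 2 / n := by positivity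
  have hswap : (∑ σ : Fin dd → Equiv.Perm (Fin n), ((Rterm n dd k σ : ℕ) : ℝ))
      = ∑ i ∈ Finset.univ.filter (fun i : Fin k → Fin n => numVertices i = numEdges i),
          ∑ σ : Fin dd → Equiv.Perm (Fin n),
            ((if 1 < pathWeight (sumPermN n dd σ) i then pathWeight (sumPermN n dd σ) i else 0
              : ℕ) : ℝ) := by
    rw [← Finset.sum_comm]
    apply Finset.sum_congr rfl
    intro σ _
    rw [Rterm]
    push_cast
    rfl
  rw [hswap]
  have hterm : ∀ i ∈ Finset.univ.filter (fun i : Fin k → Fin n => numVertices i = numEdges i),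
      (∑ σ : Fin dd → Equiv.Perm (Fin n),
            ((if 1 < pathWeight (sumPermN n dd σ) i then pathWeight (sumPermN n dd σ) i else 0
              : ℕ) : ℝ))
        ≤ (n.factorial : ℝ) ^ dd
            * ((k : ℝ) * (dd : ℝ) ^ (2 * k + 1) * (2 / n) ^ (numVertices i + 1)) := by
    intro i hi
    have hve : numVertices i = numEdges i := (Finset.mem_filter.1 hi).2
    set bad2 := Finset.univ.filter (fun σ : Fin dd → Equiv.Perm (Fin n) =>
        (∀ t, ∃ q, σ q (i t) = i (t + 1)) ∧
        ∃ t0 q q', q ≠ q' ∧ σ q (i t0) = i (t0 + 1) ∧ σ q' (i t0) = i (t0 + 1)) with hbad2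
    have hzero : ∀ σ ∈ (Finset.univ : Finset (Fin dd → Equiv.Perm (Fin n))), σ ∉ bad2 →
        ((if 1 < pathWeight (sumPermN n dd σ) i then pathWeight (sumPermN n dd σ) i else 0
          : ℕ) : ℝ) = 0 := by
      intro σ _ hσ
      rw [hbad2] at hσ
      simp only [Finset.mem_filter, Finset.mem_univ, true_and] at hσ
      by_cases h1 : 1 < pathWeight (sumPermN n dd σ) i
      · exfalso
        exact hσ ⟨pathWeight_cover (by omega), pathWeight_double h1⟩
      · simp [h1]
    calc (∑ σ : Fin dd → Equiv.Perm (Fin n),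
            ((if 1 < pathWeight (sumPermN n dd σ) i then pathWeight (sumPermN n dd σ) i else 0
              : ℕ) : ℝ))
        = ∑ σ ∈ bad2,
            ((if 1 < pathWeight (sumPermN n dd σ) i then pathWeight (sumPermN n dd σ) i else 0
              : ℕ) : ℝ) :=
          (Finset.sum_subset (Finset.filter_subset _ _) hzero).symm
      _ ≤ ∑ _σ ∈ bad2, ((dd : ℝ) ^ k) := by
          apply Finset.sum_le_sum
          intro σ _
          have h1 : (if 1 < pathWeight (sumPermN n dd σ) i then pathWeight (sumPermN n dd σ) i
              else 0) ≤ dd ^ k := by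
            split
            · exact pathWeight_le σ i
            · exact Nat.zero_le _
          exact_mod_cast Nat.cast_le.mpr h1
      _ = ((bad2.card : ℝ)) * (dd : ℝ) ^ k := by rw [Finset.sum_const, nsmul_eq_mul]
      _ ≤ ((k : ℝ) * (dd : ℝ) ^ (k + 1) * (n.factorial : ℝ) ^ dd * (2 / n) ^ (numEdges i + 1))
            * (dd : ℝ) ^ k :=
          mul_le_mul_of_nonneg_right (bad2_card hn i) (by positivity)
      _ = (n.factorial : ℝ) ^ dd
            * ((k : ℝ) * (dd : ℝ) ^ (2 * k + 1) * (2 / n) ^ (numVertices i + 1)) := by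
          rw [← hve]
          rw [show 2 * k + 1 = (k + 1) + k by ring, pow_add]
          ring
  calc (∑ i ∈ Finset.univ.filter (fun i : Fin k → Fin n => numVertices i = numEdges i),
          ∑ σ : Fin dd → Equiv.Perm (Fin n),
            ((if 1 < pathWeight (sumPermN n dd σ) i then pathWeight (sumPermN n dd σ) i else 0
              : ℕ) : ℝ))
      ≤ ∑ i ∈ Finset.univ.filter (fun i : Fin k → Fin n => numVertices i = numEdges i),
          (n.factorial : ℝ) ^ dd
            * ((k : ℝ) * (dd : ℝ) ^ (2 * k + 1) * (2 / n) ^ (numVertices i + 1)) :=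
        Finset.sum_le_sum hterm
    _ ≤ ∑ i : Fin k → Fin n,
          (n.factorial : ℝ) ^ dd
            * ((k : ℝ) * (dd : ℝ) ^ (2 * k + 1) * (2 / n) ^ (numVertices i + 1)) :=
        Finset.sum_le_sum_of_subset_of_nonneg (Finset.filter_subset _ _)
          (fun i _ _ => by positivity)
    _ ≤ (n.factorial : ℝ) ^ dd * ((k : ℝ) * (dd : ℝ) ^ (2 * k + 1) * (2 / n)
          * ((k : ℝ) ^ k * 2 ^ (k + 1))) := by
        have heq : ∑ i : Fin k → Fin n,
            (n.factorial : ℝ) ^ dd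
              * ((k : ℝ) * (dd : ℝ) ^ (2 * k + 1) * (2 / n) ^ (numVertices i + 1))
            = (n.factorial : ℝ) ^ dd * ((k : ℝ) * (dd : ℝ) ^ (2 * k + 1) * (2 / n))
              * ∑ i : Fin k → Fin n, ((2:ℝ) / n) ^ (numVertices i) := by
          rw [Finset.mul_sum]
          apply Finset.sum_congr rfl
          intro i _
          rw [pow_succ]
          ring
        rw [heq]
        have hsum := sum_pow_numVertices (k := k) hn0 h2n0
          (by rw [div_mul_eq_mul_div, mul_div_assoc]
              have : (n:ℝ) ≠ 0 := by positivity
              rw [div_self this, mul_one])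
        calc (n.factorial : ℝ) ^ dd * ((k : ℝ) * (dd : ℝ) ^ (2 * k + 1) * (2 / n))
              * ∑ i : Fin k → Fin n, ((2:ℝ) / n) ^ (numVertices i)
            ≤ (n.factorial : ℝ) ^ dd * ((k : ℝ) * (dd : ℝ) ^ (2 * k + 1) * (2 / n))
              * ((k : ℝ) ^ k * 2 ^ (k + 1)) :=
              mul_le_mul_of_nonneg_left hsum (by positivity)
          _ = (n.factorial : ℝ) ^ dd * ((k : ℝ) * (dd : ℝ) ^ (2 * k + 1) * (2 / n)
              * ((k : ℝ) ^ k * 2 ^ (k + 1))) := by ring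
end main


/-- For `d(n)` with `log d(n) = o(log n)` and fixed `k ≥ 1`, the error terms `R_k + S_k`
in the trace expansion converge to `0` in probability as `n → ∞`. -/
theorem error_terms_to_zero_in_probability (d : ℕ → ℕ) (hd1 : ∀ n, 1 ≤ d n)
    (hdlog : Tendsto (fun n => Real.log (d n) / Real.log n) atTop (nhds 0))
    (k : ℕ) [NeZero k] :
    ∀ ε : ℝ, 0 < ε →
      Tendsto
        (fun n : ℕ =>
          pr (fun σ : Fin (d n) → Equiv.Perm (Fin n) =>
            ε ≤ ((Rterm n (d n) k σ + Sterm n (d n) k σ : ℕ) : ℝ)))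
        atTop (nhds 0) := by
  intro ε hε
  set C : ℝ := ((k:ℝ) + 1) * ((k:ℝ) ^ k * 2 ^ (k + 2)) / ε with hC
  have hC0 : 0 ≤ C := by positivity
  have hδpos : (0:ℝ) < 1 / (2 * (2 * (k:ℝ) + 1)) := by positivity
  have hev := (NormedAddCommGroup.tendsto_nhds_zero.mp hdlog) _ hδpos
  apply squeeze_zero' (g := fun n : ℕ => C * (n : ℝ) ^ (-(1/2 : ℝ)))
  · refine Eventually.of_forall (fun n => ?_)
    unfold pr
    positivity
  · filter_upwards [hev, eventually_ge_atTop (2 * (k + 1)), eventually_ge_atTop 2]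
      with n h1 h2 h3
    have hn0 : 0 < n := by omega
    have hn0' : (0:ℝ) < n := by exact_mod_cast hn0
    have hd0 : 0 < d n := hd1 n
    have hd0' : (0:ℝ) < d n := by exact_mod_cast hd0
    set dd := d n with hdd
    -- step 1: d^(2k+1) ≤ n^(1/2)
    have hlogn : 0 < Real.log n := Real.log_pos (by exact_mod_cast (by omega : 1 < n))
    have hlogd : Real.log dd < Real.log n / (2 * (2 * (k:ℝ) + 1)) := by
      have habs : Real.log dd / Real.log n < 1 / (2 * (2 * (k:ℝ) + 1)) :=
        lt_of_le_of_lt (le_abs_self _) h1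
      calc Real.log dd = (Real.log dd / Real.log n) * Real.log n := by
            field_simp
        _ < (1 / (2 * (2 * (k:ℝ) + 1))) * Real.log n :=
            mul_lt_mul_of_pos_right habs hlogn
        _ = Real.log n / (2 * (2 * (k:ℝ) + 1)) := by ring
    have hkey : ((dd:ℝ)) ^ (2 * k + 1) ≤ (n:ℝ) ^ ((1:ℝ)/2) := by
      rw [← Real.log_le_log_iff (by positivity) (Real.rpow_pos_of_pos hn0' _),
        Real.log_pow, Real.log_rpow hn0']
      have hlogd0 : 0 ≤ Real.log dd := Real.log_natCast_nonneg _
      have h2k1 : (0:ℝ) < 2 * (k:ℝ) + 1 := by positivity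
      calc ((2 * k + 1 : ℕ) : ℝ) * Real.log dd
          = (2 * (k:ℝ) + 1) * Real.log dd := by push_cast; ring
        _ ≤ (2 * (k:ℝ) + 1) * (Real.log n / (2 * (2 * (k:ℝ) + 1))) :=
            mul_le_mul_of_nonneg_left hlogd.le (by positivity)
        _ = Real.log n * ((2 * (k:ℝ) + 1) / (2 * (2 * (k:ℝ) + 1))) := by ring
        _ ≤ (1:ℝ)/2 * Real.log n := by
            have hq : (2 * (k:ℝ) + 1) / (2 * (2 * (k:ℝ) + 1)) = 1/2 := by
              rw [div_eq_div_iff (by positivity) (by norm_num)]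
              ring
            rw [hq]
            linarith
    -- step 2: Markov + expectation
    have hcard : (Fintype.card (Fin dd → Equiv.Perm (Fin n)) : ℝ)
        = (n.factorial : ℝ) ^ dd := by
      rw [Fintype.card_fun, Fintype.card_perm, Fintype.card_fin, Fintype.card_fin]
      push_cast
      rfl
    have hfact0 : (0:ℝ) < (n.factorial : ℝ) ^ dd := by positivity
    have hmarkov := markov_pr (Ω := Fin dd → Equiv.Perm (Fin n))
      (fun σ => Rterm n dd k σ + Sterm n dd k σ) hε
    have hsum : (∑ σ : Fin dd → Equiv.Perm (Fin n),
          ((Rterm n dd k σ + Sterm n dd k σ : ℕ) : ℝ))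
        ≤ (n.factorial : ℝ) ^ dd
            * (((k:ℝ) + 1) * (dd : ℝ) ^ (2 * k + 1) * (2 / n)
              * ((k : ℝ) ^ k * 2 ^ (k + 1))) := by
      have hsplit : (∑ σ : Fin dd → Equiv.Perm (Fin n),
            ((Rterm n dd k σ + Sterm n dd k σ : ℕ) : ℝ))
          = (∑ σ : Fin dd → Equiv.Perm (Fin n), ((Rterm n dd k σ : ℕ) : ℝ))
            + (∑ σ : Fin dd → Equiv.Perm (Fin n), ((Sterm n dd k σ : ℕ) : ℝ)) := by
        rw [← Finset.sum_add_distrib]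
        apply Finset.sum_congr rfl
        intro σ _
        push_cast
        ring
      rw [hsplit]
      have hR := R_expectation (k := k) (n := n) (dd := dd) h2
      have hS := S_expectation (k := k) (n := n) (dd := dd) h2
      have hdd1 : (1:ℝ) ≤ (dd:ℝ) := by exact_mod_cast hd0
      have hddpow : (dd:ℝ) ^ (2 * k) ≤ (dd:ℝ) ^ (2 * k + 1) :=
        pow_le_pow_right₀ hdd1 (by omega)
      have h2n0 : (0:ℝ) ≤ 2 / n := by positivity
      nlinarith [hfact0.le, pow_nonneg (by positivity : (0:ℝ) ≤ (k:ℝ)) k,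
        pow_nonneg (by norm_num : (0:ℝ) ≤ (2:ℝ)) (k+1),
        mul_nonneg (mul_nonneg (pow_nonneg (by positivity : (0:ℝ) ≤ (k:ℝ)) k)
          (pow_nonneg (by norm_num : (0:ℝ) ≤ (2:ℝ)) (k+1))) h2n0,
        mul_le_mul_of_nonneg_left hddpow (mul_nonneg (mul_nonneg
          (mul_nonneg (pow_nonneg (by positivity : (0:ℝ) ≤ (k:ℝ)) k)
            (pow_nonneg (by norm_num : (0:ℝ) ≤ (2:ℝ)) (k+1))) h2n0) hfact0.le)]
    -- step 3: assemble
    have hpr : pr (fun σ : Fin dd → Equiv.Perm (Fin n) =>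
          ε ≤ ((Rterm n dd k σ + Sterm n dd k σ : ℕ) : ℝ))
        ≤ C * (dd:ℝ) ^ (2 * k + 1) / n := by
      unfold pr
      rw [hcard]
      rw [div_le_iff₀ hfact0]
      calc ((Finset.univ.filter (fun σ : Fin dd → Equiv.Perm (Fin n) =>
            ε ≤ ((Rterm n dd k σ + Sterm n dd k σ : ℕ) : ℝ))).card : ℝ)
          ≤ (∑ σ : Fin dd → Equiv.Perm (Fin n),
              ((Rterm n dd k σ + Sterm n dd k σ : ℕ) : ℝ)) / ε := hmarkov
        _ ≤ ((n.factorial : ℝ) ^ dd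
              * (((k:ℝ) + 1) * (dd : ℝ) ^ (2 * k + 1) * (2 / n)
                * ((k : ℝ) ^ k * 2 ^ (k + 1)))) / ε := by
            apply div_le_div_of_nonneg_right hsum hε.le
        _ = C * (dd:ℝ) ^ (2 * k + 1) / n * (n.factorial : ℝ) ^ dd := by
            rw [hC]
            field_simp
            ring
    calc pr (fun σ : Fin dd → Equiv.Perm (Fin n) =>
          ε ≤ ((Rterm n dd k σ + Sterm n dd k σ : ℕ) : ℝ))
        ≤ C * (dd:ℝ) ^ (2 * k + 1) / n := hpr
      _ ≤ C * (n:ℝ) ^ ((1:ℝ)/2) / n := by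
          apply div_le_div_of_nonneg_right _ hn0'.le
          exact mul_le_mul_of_nonneg_left hkey hC0
      _ = C * (n : ℝ) ^ (-(1/2 : ℝ)) := by
          rw [mul_div_assoc, show -(1/2:ℝ) = (1:ℝ)/2 - 1 by norm_num,
            Real.rpow_sub hn0', Real.rpow_one]
  · have h := (tendsto_rpow_neg_atTop (by norm_num : (0:ℝ) < 1/2)).comp
      tendsto_natCast_atTop_atTop
    have h2 := h.const_mul C
    simpa using h2
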